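/- For the convex function H(u) := ∫₀¹ |u - Q_ν(t)| dt on ℝ, the one-sided derivatives satisfy D₋H(u) = 2R_ν⁻(u) - 1 and D₊H(u) = 2R_ν⁺(u) - 1, so that the subdifferential is ∂H(u) = [2R_ν⁻(u) - 1, 2R_ν⁺(u) - 1]. -/

import Mathlib

open MeasureTheory Set Filter ProbabilityTheory
open scoped Topology

noncomputable def Rplus (μ : Measure ℝ) (x : ℝ) : ℝ := (μ (Iic x)).toReal

noncomputable def Rminus (μ : Measure ℝ) (x : ℝ) : ℝ := (μ (Iio x)).toReal

noncomputable def Quant (μ : Measure ℝ) (s : ℝ) : ℝ := sInf {x : ℝ | s ≤ Rplus μ x}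

section quant
variable (ν : Measure ℝ) [IsProbabilityMeasure ν]

lemma Rplus_eq_cdf (x : ℝ) : Rplus ν x = cdf ν x := by rw [cdf_eq_real, Rplus, measureReal_def]

lemma Squant_nonempty {s : ℝ} (hs : s < 1) : {x : ℝ | s ≤ Rplus ν x}.Nonempty := by
  have h := (tendsto_cdf_atTop ν).eventually (eventually_ge_nhds hs)
  rcases h.exists with ⟨x, hx⟩
  exact ⟨x, by rwa [mem_setOf_eq, Rplus_eq_cdf]⟩

lemma Squant_bddBelow {s : ℝ} (hs : 0 < s) : BddBelow {x : ℝ | s ≤ Rplus ν x} := by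
  have h := (tendsto_cdf_atBot ν).eventually (eventually_lt_nhds hs)
  rcases h.exists with ⟨y, hy⟩
  refine ⟨y, fun z hz => ?_⟩
  by_contra hzy
  push_neg at hzy
  rw [mem_setOf_eq, Rplus_eq_cdf] at hz
  exact absurd (hz.trans (monotone_cdf ν hzy.le)) (not_le.2 hy)

lemma le_cdf_quant {s : ℝ} (hs0 : 0 < s) (hs1 : s < 1) : s ≤ cdf ν (Quant ν s) := by
  set a := Quant ν s with ha
  have hne := Squant_nonempty ν hs1
  have hbdd := Squant_bddBelow ν hs0
  have key : ∀ x ∈ Ioi a, s ≤ cdf ν x := by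
    intro x hx
    obtain ⟨z, hz, hzx⟩ := (csInf_lt_iff hbdd hne).1 hx
    rw [mem_setOf_eq, Rplus_eq_cdf] at hz
    exact hz.trans (monotone_cdf ν hzx.le)
  have hcont : Tendsto (cdf ν) (𝓝[>] a) (𝓝 (cdf ν a)) :=
    ((cdf ν).right_continuous a).mono_left (nhdsWithin_mono _ Ioi_subset_Ici_self)
  exact ge_of_tendsto hcont (eventually_nhdsWithin_of_forall key)

lemma quant_le_iff {s x : ℝ} (hs0 : 0 < s) (hs1 : s < 1) :
    Quant ν s ≤ x ↔ s ≤ cdf ν x := by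
  constructor
  · intro h
    exact (le_cdf_quant ν hs0 hs1).trans (monotone_cdf ν h)
  · intro h
    exact csInf_le (Squant_bddBelow ν hs0) (by rwa [mem_setOf_eq, Rplus_eq_cdf])

lemma quant_monotoneOn : MonotoneOn (Quant ν) (Ioo 0 1) := by
  intro s hs s' hs' hss
  refine csInf_le_csInf (Squant_bddBelow ν hs.1) (Squant_nonempty ν hs'.2) ?_
  intro x hx
  exact le_trans hss hx

lemma quant_aemeasurable : AEMeasurable (Quant ν) (volume.restrict (Ioo (0:ℝ) 1)) :=
  aemeasurable_restrict_of_monotoneOn measurableSet_Ioo (quant_monotoneOn ν)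

lemma map_quant : (volume.restrict (Ioo (0:ℝ) 1)).map (Quant ν) = ν := by
  haveI : IsProbabilityMeasure (volume.restrict (Ioo (0:ℝ) 1)) :=
    ⟨by simp [Real.volume_Ioo]⟩
  haveI : IsProbabilityMeasure ((volume.restrict (Ioo (0:ℝ) 1)).map (Quant ν)) :=
    Measure.isProbabilityMeasure_map (quant_aemeasurable ν)
  refine Measure.ext_of_Iic _ ν (fun x => ?_)
  rw [Measure.map_apply_of_aemeasurable (quant_aemeasurable ν) measurableSet_Iic,
    Measure.restrict_apply' measurableSet_Ioo]
  have hset : Quant ν ⁻¹' Iic x ∩ Ioo 0 1 = Iic (cdf ν x) ∩ Ioo 0 1 := by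
    ext s
    simp only [mem_inter_iff, mem_preimage, mem_Iic, mem_Ioo, and_congr_left_iff]
    intro hs
    rw [quant_le_iff ν hs.1 hs.2]
  rw [hset, ← ofReal_cdf ν x]
  have h0 : 0 ≤ cdf ν x := cdf_nonneg ν x
  have h1 : cdf ν x ≤ 1 := cdf_le_one ν x
  rcases eq_or_lt_of_le h1 with h | h
  · rw [h]
    have : Iic (1:ℝ) ∩ Ioo 0 1 = Ioo 0 1 := by
      ext s; simp only [mem_inter_iff, mem_Iic, mem_Ioo]
      exact ⟨fun h => h.2, fun h => ⟨h.2.le, h⟩⟩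
    simp [this, Real.volume_Ioo]
  · have : Iic (cdf ν x) ∩ Ioo 0 1 = Ioc 0 (cdf ν x) := by
      ext s
      simp only [mem_inter_iff, mem_Iic, mem_Ioo, mem_Ioc]
      exact ⟨fun hh => ⟨hh.2.1, hh.1⟩, fun hh => ⟨hh.2, hh.1, lt_of_le_of_lt hh.2 h⟩⟩
    rw [this, Real.volume_Ioc]
    simp

end quant

/-- `H(u) = ∫₀¹ |u - Q_ν(t)| dt`. -/
noncomputable def Hfun (ν : Measure ℝ) (u : ℝ) : ℝ :=
  ∫ t in Ioo (0 : ℝ) 1, |u - Quant ν t|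

section part3
variable (ν : Measure ℝ) [IsProbabilityMeasure ν]

variable (ν : Measure ℝ) [IsProbabilityMeasure ν]

lemma slope_integral_eq (hint : ∀ w : ℝ, Integrable (fun x => |w - x|) ν) {u w : ℝ}
    (hw : w ≠ u) :
    slope (fun u => ∫ x, |u - x| ∂ν) u w = ∫ x, (|w - x| - |u - x|) / (w - u) ∂ν := by
  rw [slope_def_field, integral_div, integral_sub (hint w) (hint u)]

lemma deriv_right (hint : ∀ w : ℝ, Integrable (fun x => |w - x|) ν) (u : ℝ) :
    Tendsto (slope (fun u => ∫ x, |u - x| ∂ν) u) (𝓝[>] u)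
      (𝓝 (2 * (ν (Iic u)).toReal - 1)) := by
  have hgval : (∫ x, ((Iic u).indicator (fun _ => (2:ℝ)) x - 1) ∂ν)
      = 2 * (ν (Iic u)).toReal - 1 := by
    rw [integral_sub ((integrable_const (2:ℝ)).indicator measurableSet_Iic) (integrable_const 1),
      integral_indicator_const _ measurableSet_Iic, integral_const]
    simp [mul_comm, measureReal_def]
  have htend : Tendsto (fun w => ∫ x, (|w - x| - |u - x|) / (w - u) ∂ν) (𝓝[>] u)
      (𝓝 (∫ x, ((Iic u).indicator (fun _ => (2:ℝ)) x - 1) ∂ν)) := by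
    refine tendsto_integral_filter_of_dominated_convergence (fun _ => (1:ℝ)) ?_ ?_
      (integrable_const 1) ?_
    · refine Eventually.of_forall fun w => ?_
      exact (((continuous_const.sub continuous_id).abs.sub
        (continuous_const.sub continuous_id).abs).div_const _).aestronglyMeasurable
    · refine eventually_nhdsWithin_of_forall fun w hw => ae_of_all _ fun x => ?_
      have hwu : (0:ℝ) < w - u := sub_pos.2 hw
      rw [Real.norm_eq_abs, abs_div]
      rw [div_le_one (abs_pos.2 hwu.ne')]
      calc |(|w - x| - |u - x|)| ≤ |(w - x) - (u - x)| := abs_abs_sub_abs_le_abs_sub _ _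
        _ = |w - u| := by ring_nf
    · refine ae_of_all _ fun x => ?_
      by_cases hx : x ≤ u
      · refine Tendsto.congr' ?_ tendsto_const_nhds
        refine eventually_nhdsWithin_of_forall fun w hw => ?_
        have h1 : (Iic u).indicator (fun _ => (2:ℝ)) x - 1 = 1 := by
          rw [indicator_of_mem (mem_Iic.2 hx)]; norm_num
        have hwu : (0:ℝ) < w - u := sub_pos.2 hw
        have key : (|w - x| - |u - x|) / (w - u) = 1 := by
            rw [abs_of_nonneg (by linarith : (0:ℝ) ≤ w - x),
              abs_of_nonneg (by linarith : (0:ℝ) ≤ u - x),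
              show w - x - (u - x) = w - u by ring, div_self hwu.ne']
        simp [h1, key]
      · push_neg at hx
        refine Tendsto.congr' ?_ tendsto_const_nhds
        filter_upwards [Ioo_mem_nhdsGT_of_mem ⟨le_refl u, hx⟩] with w hw
        have h1 : (Iic u).indicator (fun _ => (2:ℝ)) x - 1 = -1 := by
          rw [indicator_of_notMem (by simpa using hx)]; norm_num
        have hwu : (0:ℝ) < w - u := sub_pos.2 hw.1
        have key : (|w - x| - |u - x|) / (w - u) = -1 := by
          rw [abs_of_nonpos (by linarith [hw.2] : w - x ≤ 0),
            abs_of_nonpos (by linarith : u - x ≤ 0),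
              show -(w - x) - -(u - x) = -(w - u) by ring, neg_div, div_self hwu.ne']
        simp [h1, key]
  rw [hgval] at htend
  refine htend.congr' ?_
  exact eventually_nhdsWithin_of_forall fun w hw =>
    (slope_integral_eq ν hint (ne_of_gt hw)).symm

lemma deriv_left (hint : ∀ w : ℝ, Integrable (fun x => |w - x|) ν) (u : ℝ) :
    Tendsto (slope (fun u => ∫ x, |u - x| ∂ν) u) (𝓝[<] u)
      (𝓝 (2 * (ν (Iio u)).toReal - 1)) := by
  have hgval : (∫ x, ((Iio u).indicator (fun _ => (2:ℝ)) x - 1) ∂ν)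
      = 2 * (ν (Iio u)).toReal - 1 := by
    rw [integral_sub ((integrable_const (2:ℝ)).indicator measurableSet_Iio) (integrable_const 1),
      integral_indicator_const _ measurableSet_Iio, integral_const]
    simp [mul_comm, measureReal_def]
  have htend : Tendsto (fun w => ∫ x, (|w - x| - |u - x|) / (w - u) ∂ν) (𝓝[<] u)
      (𝓝 (∫ x, ((Iio u).indicator (fun _ => (2:ℝ)) x - 1) ∂ν)) := by
    refine tendsto_integral_filter_of_dominated_convergence (fun _ => (1:ℝ)) ?_ ?_
      (integrable_const 1) ?_
    · refine Eventually.of_forall fun w => ?_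
      exact (((continuous_const.sub continuous_id).abs.sub
        (continuous_const.sub continuous_id).abs).div_const _).aestronglyMeasurable
    · refine eventually_nhdsWithin_of_forall fun w hw => ae_of_all _ fun x => ?_
      have hwu : w - u < 0 := sub_neg.2 hw
      rw [Real.norm_eq_abs, abs_div]
      rw [div_le_one (abs_pos.2 hwu.ne)]
      calc |(|w - x| - |u - x|)| ≤ |(w - x) - (u - x)| := abs_abs_sub_abs_le_abs_sub _ _
        _ = |w - u| := by ring_nf
    · refine ae_of_all _ fun x => ?_
      by_cases hx : x < u
      · refine Tendsto.congr' ?_ tendsto_const_nhds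
        filter_upwards [Ioo_mem_nhdsLT_of_mem ⟨hx, le_refl u⟩] with w hw
        have h1 : (Iio u).indicator (fun _ => (2:ℝ)) x - 1 = 1 := by
          rw [indicator_of_mem (mem_Iio.2 hx)]; norm_num
        have hwu : w - u < 0 := sub_neg.2 hw.2
        have key : (|w - x| - |u - x|) / (w - u) = 1 := by
          rw [abs_of_nonneg (by linarith [hw.1] : (0:ℝ) ≤ w - x),
            abs_of_nonneg (by linarith : (0:ℝ) ≤ u - x),
              show w - x - (u - x) = w - u by ring, div_self hwu.ne]
        simp [h1, key]
      · push_neg at hx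
        refine Tendsto.congr' ?_ tendsto_const_nhds
        refine eventually_nhdsWithin_of_forall fun w hw => ?_
        have h1 : (Iio u).indicator (fun _ => (2:ℝ)) x - 1 = -1 := by
          rw [indicator_of_notMem (by simpa using hx)]; norm_num
        have hwu : w - u < 0 := sub_neg.2 hw
        have key : (|w - x| - |u - x|) / (w - u) = -1 := by
          rw [abs_of_nonpos (by linarith : w - x ≤ 0),
            abs_of_nonpos (by linarith : u - x ≤ 0),
              show -(w - x) - -(u - x) = -(w - u) by ring, neg_div, div_self hwu.ne]
        simp [h1, key]
  rw [hgval] at htend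
  refine htend.congr' ?_
  exact eventually_nhdsWithin_of_forall fun w hw =>
    (slope_integral_eq ν hint (ne_of_lt hw)).symm

end part3

section part4
variable (ν : Measure ℝ) [IsProbabilityMeasure ν]

lemma abs_integrable (hν : Integrable (fun x : ℝ => x ^ 2) ν) (w : ℝ) :
    Integrable (fun x => |w - x|) ν := by
  have hg : Integrable (fun x : ℝ => |w| + (1 + x ^ 2) / 2) ν :=
    (integrable_const _).add (((integrable_const (1:ℝ)).add hν).div_const 2)
  refine hg.mono' ((continuous_const.sub continuous_id).abs.aestronglyMeasurable) ?_
  refine ae_of_all _ fun x => ?_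
  have h1 : |w - x| ≤ |w| + |x| := by
    calc |w - x| ≤ |w| + |(-x)| := abs_add_le w (-x) |>.trans_eq' (by ring_nf)
    _ = |w| + |x| := by rw [abs_neg]
  have h2 : |x| ≤ (1 + x ^ 2) / 2 := by nlinarith [sq_nonneg (|x| - 1), sq_abs x]
  rw [Real.norm_eq_abs, abs_abs]
  linarith

lemma Hfun_eq_integral (u : ℝ) : Hfun ν u = ∫ x, |u - x| ∂ν := by
  rw [Hfun]
  conv_rhs => rw [← map_quant ν]
  exact (integral_map (quant_aemeasurable ν)
    ((continuous_const.sub continuous_id).abs.aestronglyMeasurable)).symm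

/-- One-sided derivatives of `H`: `D₋H(u) = 2R_ν⁻(u) - 1`, `D₊H(u) = 2R_ν⁺(u) - 1`,
and `∂H(u) = [2R_ν⁻(u) - 1, 2R_ν⁺(u) - 1]`. -/
theorem Hfun_one_sided_derivs (ν : Measure ℝ) [IsProbabilityMeasure ν]
    (hν : Integrable (fun x : ℝ => x ^ 2) ν) (u : ℝ) :
    HasDerivWithinAt (Hfun ν) (2 * Rminus ν u - 1) (Iic u) u ∧
    HasDerivWithinAt (Hfun ν) (2 * Rplus ν u - 1) (Ici u) u ∧
    ∀ v : ℝ, (∀ w : ℝ, Hfun ν u + v * (w - u) ≤ Hfun ν w) ↔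
      v ∈ Icc (2 * Rminus ν u - 1) (2 * Rplus ν u - 1) := by
  have hint : ∀ w : ℝ, Integrable (fun x => |w - x|) ν := abs_integrable ν hν
  have hHeq : Hfun ν = fun u => ∫ x, |u - x| ∂ν := funext (Hfun_eq_integral ν)
  have hL : HasDerivWithinAt (Hfun ν) (2 * Rminus ν u - 1) (Iic u) u := by
    rw [hasDerivWithinAt_iff_tendsto_slope, Iic_diff_right, hHeq]
    exact deriv_left ν hint u
  have hR : HasDerivWithinAt (Hfun ν) (2 * Rplus ν u - 1) (Ici u) u := by
    rw [hasDerivWithinAt_iff_tendsto_slope, Ici_sdiff_left, hHeq]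
    exact deriv_right ν hint u
  refine ⟨hL, hR, fun v => ⟨fun h => ?_, fun hv w => ?_⟩⟩
  · have htL : Tendsto (slope (Hfun ν) u) (𝓝[<] u) (𝓝 (2 * Rminus ν u - 1)) := by
      have := hasDerivWithinAt_iff_tendsto_slope.1 hL
      rwa [Iic_diff_right] at this
    have htR : Tendsto (slope (Hfun ν) u) (𝓝[>] u) (𝓝 (2 * Rplus ν u - 1)) := by
      have := hasDerivWithinAt_iff_tendsto_slope.1 hR
      rwa [Ici_sdiff_left] at this
    constructor
    · refine le_of_tendsto htL (eventually_nhdsWithin_of_forall fun w hw => ?_)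
      rw [slope_def_field]
      rw [div_le_iff_of_neg (sub_neg.2 hw)]
      have := h w
      linarith [mul_comm v (w - u)]
    · refine ge_of_tendsto htR (eventually_nhdsWithin_of_forall fun w hw => ?_)
      rw [slope_def_field, le_div_iff₀ (sub_pos.2 hw)]
      have := h w
      linarith [mul_comm v (w - u)]
  · rcases lt_trichotomy w u with hwu | hwu | hwu
    · -- w < u : use lower bound with g₋
      have hdiff : ∫ x, (|w - x| - |u - x|) ∂ν = Hfun ν w - Hfun ν u := by
        rw [integral_sub (hint w) (hint u), hHeq]
      have hmono : (w - u) * (2 * Rminus ν u - 1) ≤ ∫ x, (|w - x| - |u - x|) ∂ν := by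
        have hgval : (∫ x, (w - u) * ((Iio u).indicator (fun _ => (2:ℝ)) x - 1) ∂ν)
            = (w - u) * (2 * Rminus ν u - 1) := by
          rw [integral_const_mul, integral_sub
            ((integrable_const (2:ℝ)).indicator measurableSet_Iio) (integrable_const 1),
            integral_indicator_const _ measurableSet_Iio, integral_const]
          simp [Rminus, mul_comm, measureReal_def]
        rw [← hgval]
        refine integral_mono (Integrable.const_mul (((integrable_const (2:ℝ)).indicator
          measurableSet_Iio).sub (integrable_const 1)) _) ((hint w).sub (hint u)) fun x => ?_
        by_cases hx : x < u
        · simp only [indicator_of_mem (mem_Iio.2 hx)]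
          have : |u - x| - |w - x| ≤ |u - w| := by
            calc |u - x| - |w - x| ≤ |(u - x) - (w - x)| := abs_sub_abs_le_abs_sub _ _
            _ = |u - w| := by ring_nf
          rw [abs_of_pos (sub_pos.2 hwu)] at this
          nlinarith
        · push_neg at hx
          rw [indicator_of_notMem (show x ∉ Iio u by simpa using hx)]
          rw [abs_of_nonpos (by linarith : w - x ≤ 0), abs_of_nonpos (by linarith : u - x ≤ 0)]
          nlinarith
      have hvle : (w - u) * v ≤ (w - u) * (2 * Rminus ν u - 1) := by
        have := hv.1
        nlinarith
      nlinarith [hdiff, hmono, hvle]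
    · simp [hwu]
    · -- u < w : use lower bound with g₊
      have hdiff : ∫ x, (|w - x| - |u - x|) ∂ν = Hfun ν w - Hfun ν u := by
        rw [integral_sub (hint w) (hint u), hHeq]
      have hmono : (w - u) * (2 * Rplus ν u - 1) ≤ ∫ x, (|w - x| - |u - x|) ∂ν := by
        have hgval : (∫ x, (w - u) * ((Iic u).indicator (fun _ => (2:ℝ)) x - 1) ∂ν)
            = (w - u) * (2 * Rplus ν u - 1) := by
          rw [integral_const_mul, integral_sub
            ((integrable_const (2:ℝ)).indicator measurableSet_Iic) (integrable_const 1),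
            integral_indicator_const _ measurableSet_Iic, integral_const]
          simp [Rplus, mul_comm, measureReal_def]
        rw [← hgval]
        refine integral_mono (Integrable.const_mul (((integrable_const (2:ℝ)).indicator
          measurableSet_Iic).sub (integrable_const 1)) _) ((hint w).sub (hint u)) fun x => ?_
        by_cases hx : x ≤ u
        · simp only [indicator_of_mem (mem_Iic.2 hx)]
          rw [abs_of_nonneg (by linarith : (0:ℝ) ≤ w - x),
            abs_of_nonneg (by linarith : (0:ℝ) ≤ u - x)]
          nlinarith
        · push_neg at hx
          rw [indicator_of_notMem (show x ∉ Iic u by simpa using hx)]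
          have : |u - x| - |w - x| ≤ |u - w| := by
            calc |u - x| - |w - x| ≤ |(u - x) - (w - x)| := abs_sub_abs_le_abs_sub _ _
            _ = |u - w| := by ring_nf
          rw [abs_of_neg (sub_neg.2 hwu)] at this
          nlinarith
      have hvle : (w - u) * v ≤ (w - u) * (2 * Rplus ν u - 1) := by
        have := hv.2
        nlinarith
      nlinarith [hdiff, hmono, hvle]

end part4
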